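/- arXiv:0810.1621 — 5 statements merged into one kernel-verified Lean document; each statement's English description precedes it below -/
import Mathlib

section
/- Let χ be a bicharacter on ℤ^I of Cartan type with generalized Cartan matrix C, i.e. χ(α_i,α_i)^{c_{ij}} = χ(α_i,α_j)χ(α_j,α_i) for all i,j ∈ I, and [m+1]_{χ(α_i,α_i)} ≠ 0 for all i ∈ I and m < max{-c_{ij} : j ≠ i}. Then for each p ∈ I, the reflected bicharacter r_p(χ) = (s_p)*χ satisfies r_p(χ)(α_i,α_i) = χ(α_i,α_i) and r_p(χ)(α_i,α_j) r_p(χ)(α_j,α_i) = χ(α_i,α_j)χ(α_j,α_i) for all i,j ∈ I; in particular r_p(χ) is again of Cartan type with the same Cartan matrix C. -/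
/-- Let `χ` be a bicharacter on `ℤ^I` of Cartan type with generalized Cartan matrix `C`,
i.e. `χ(α_i,α_i)^{c_{ij}} = χ(α_i,α_j)χ(α_j,α_i)` for all `i,j`, and
`[m+1]_{χ(α_i,α_i)} ≠ 0` whenever `m < -c_{ij}` for some `j ≠ i`. Then for each `p ∈ I`
the reflected bicharacter `r_p(χ)(a,b) = χ(s_p a, s_p b)` satisfies
`r_p(χ)(α_i,α_i) = χ(α_i,α_i)` and
`r_p(χ)(α_i,α_j) r_p(χ)(α_j,α_i) = χ(α_i,α_j)χ(α_j,α_i)`; in particular `r_p(χ)` is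
again of Cartan type with the same Cartan matrix `C`. -/
theorem stmt_6 {k : Type*} [Field k] {I : Type*} [Fintype I] [DecidableEq I] [Nonempty I]
    (C : I → I → ℤ)
    (hdiag : ∀ i, C i i = 2)
    (hoff : ∀ j l, j ≠ l → C j l ≤ 0)
    (hzero : ∀ i j, C i j = 0 → C j i = 0)
    (χ : (I → ℤ) → (I → ℤ) → kˣ)
    (h1 : ∀ a b c : I → ℤ, χ (a + b) c = χ a c * χ b c)
    (h2 : ∀ c a b : I → ℤ, χ c (a + b) = χ c a * χ c b)
    (hCartan : ∀ i j : I,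
      χ (Pi.single i 1) (Pi.single i 1) ^ (C i j)
        = χ (Pi.single i 1) (Pi.single j 1) * χ (Pi.single j 1) (Pi.single i 1))
    (hqnum : ∀ i : I, ∀ m : ℕ, (∃ j, j ≠ i ∧ (m : ℤ) < -C i j) →
      (∑ l ∈ Finset.range (m + 1),
        ((χ (Pi.single i 1) (Pi.single i 1) : kˣ) : k) ^ l) ≠ 0)
    (p : I)
    (s : (I → ℤ) → (I → ℤ))
    (hs : ∀ x, s x = x - (∑ j, C p j * x j) • Pi.single p 1) :
    (∀ i : I, χ (s (Pi.single i 1)) (s (Pi.single i 1))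
        = χ (Pi.single i 1) (Pi.single i 1)) ∧
    (∀ i j : I,
      χ (s (Pi.single i 1)) (s (Pi.single j 1)) * χ (s (Pi.single j 1)) (s (Pi.single i 1))
        = χ (Pi.single i 1) (Pi.single j 1) * χ (Pi.single j 1) (Pi.single i 1)) ∧
    (∀ i j : I,
      χ (s (Pi.single i 1)) (s (Pi.single i 1)) ^ (C i j)
        = χ (s (Pi.single i 1)) (s (Pi.single j 1)) *
            χ (s (Pi.single j 1)) (s (Pi.single i 1))) ∧
    (∀ i : I, ∀ m : ℕ, (∃ j, j ≠ i ∧ (m : ℤ) < -C i j) →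
      (∑ l ∈ Finset.range (m + 1),
        ((χ (s (Pi.single i 1)) (s (Pi.single i 1)) : kˣ) : k) ^ l) ≠ 0) := by
  classical
  have h0l : ∀ b : I → ℤ, χ 0 b = 1 := by
    intro b
    have h := h1 0 0 b
    rw [add_zero] at h
    exact (right_eq_mul.mp h)
  have h0r : ∀ a : I → ℤ, χ a 0 = 1 := by
    intro a
    have h := h2 a 0 0
    rw [add_zero] at h
    exact (right_eq_mul.mp h)
  have hnl : ∀ a b : I → ℤ, χ (-a) b = (χ a b)⁻¹ := by
    intro a b
    have h := h1 a (-a) b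
    rw [add_neg_cancel, h0l] at h
    exact eq_inv_of_mul_eq_one_right h.symm
  have hnr : ∀ a b : I → ℤ, χ a (-b) = (χ a b)⁻¹ := by
    intro a b
    have h := h2 a b (-b)
    rw [add_neg_cancel, h0r] at h
    exact eq_inv_of_mul_eq_one_right h.symm
  have hz1 : ∀ (n : ℤ) (a b : I → ℤ), χ (n • a) b = χ a b ^ n := by
    intro n a b
    induction n using Int.induction_on with
    | zero => simpa using h0l b
    | succ m ih => rw [add_smul, one_smul, h1, ih, zpow_add_one]
    | pred m ih => rw [sub_smul, one_smul, sub_eq_add_neg, h1, ih, hnl, zpow_sub_one]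
  have hz2 : ∀ (n : ℤ) (a b : I → ℤ), χ a (n • b) = χ a b ^ n := by
    intro n a b
    induction n using Int.induction_on with
    | zero => simpa using h0r a
    | succ m ih => rw [add_smul, one_smul, h2, ih, zpow_add_one]
    | pred m ih => rw [sub_smul, one_smul, sub_eq_add_neg, h2, ih, hnr, zpow_sub_one]
  have hsi : ∀ i : I, s (Pi.single i 1) = Pi.single i 1 + (-(C p i)) • Pi.single p 1 := by
    intro i
    have hsum : (∑ j, C p j * (Pi.single i 1 : I → ℤ) j) = C p i := by
      simp [Pi.single_apply, mul_ite]
    rw [hs, hsum, sub_eq_add_neg, ← neg_smul]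
  have hform : ∀ i j : I, χ (s (Pi.single i 1)) (s (Pi.single j 1)) =
      χ (Pi.single i 1) (Pi.single j 1) * χ (Pi.single i 1) (Pi.single p 1) ^ (-(C p j)) *
        (χ (Pi.single p 1) (Pi.single j 1) ^ (-(C p i)) *
          χ (Pi.single p 1) (Pi.single p 1) ^ (C p i * C p j)) := by
    intro i j
    rw [hsi i, hsi j, h1, h2, h2, hz1, hz1, hz2, hz2, ← zpow_mul,
      show (-(C p j)) * (-(C p i)) = C p i * C p j by ring]
  have hc : ∀ i : I, χ (Pi.single i 1) (Pi.single p 1) * χ (Pi.single p 1) (Pi.single i 1)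
      = χ (Pi.single p 1) (Pi.single p 1) ^ (C p i) := by
    intro i
    rw [mul_comm]
    exact (hCartan p i).symm
  have key2 : ∀ (g : kˣ) (x : ℤ), (g ^ x) ^ (-x) * g ^ (x * x) = 1 := by
    intro g x
    rw [← zpow_mul, ← zpow_add, show x * (-x) + x * x = 0 by ring, zpow_zero]
  have key : ∀ (g : kˣ) (x y : ℤ),
      (g ^ x) ^ (-y) * ((g ^ y) ^ (-x) * (g ^ (x * y) * g ^ (y * x))) = 1 := by
    intro g x y
    rw [← zpow_mul, ← zpow_mul, ← zpow_add, ← zpow_add, ← zpow_add,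
      show x * (-y) + (y * (-x) + (x * y + y * x)) = 0 by ring, zpow_zero]
  have hA : ∀ i : I, χ (s (Pi.single i 1)) (s (Pi.single i 1))
      = χ (Pi.single i 1) (Pi.single i 1) := by
    intro i
    rw [hform i i]
    calc χ (Pi.single i 1) (Pi.single i 1) * χ (Pi.single i 1) (Pi.single p 1) ^ (-(C p i)) *
          (χ (Pi.single p 1) (Pi.single i 1) ^ (-(C p i)) *
            χ (Pi.single p 1) (Pi.single p 1) ^ (C p i * C p i))
        = χ (Pi.single i 1) (Pi.single i 1) *
            ((χ (Pi.single i 1) (Pi.single p 1) * χ (Pi.single p 1) (Pi.single i 1)) ^ (-(C p i)) *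
              χ (Pi.single p 1) (Pi.single p 1) ^ (C p i * C p i)) := by
          rw [mul_zpow]
          simp [mul_comm, mul_left_comm, mul_assoc]
      _ = χ (Pi.single i 1) (Pi.single i 1) := by
          rw [hc i, key2, mul_one]
  have hB : ∀ i j : I,
      χ (s (Pi.single i 1)) (s (Pi.single j 1)) * χ (s (Pi.single j 1)) (s (Pi.single i 1))
        = χ (Pi.single i 1) (Pi.single j 1) * χ (Pi.single j 1) (Pi.single i 1) := by
    intro i j
    rw [hform i j, hform j i]
    calc χ (Pi.single i 1) (Pi.single j 1) * χ (Pi.single i 1) (Pi.single p 1) ^ (-(C p j)) *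
          (χ (Pi.single p 1) (Pi.single j 1) ^ (-(C p i)) *
            χ (Pi.single p 1) (Pi.single p 1) ^ (C p i * C p j)) *
        (χ (Pi.single j 1) (Pi.single i 1) * χ (Pi.single j 1) (Pi.single p 1) ^ (-(C p i)) *
          (χ (Pi.single p 1) (Pi.single i 1) ^ (-(C p j)) *
            χ (Pi.single p 1) (Pi.single p 1) ^ (C p j * C p i)))
        = χ (Pi.single i 1) (Pi.single j 1) * χ (Pi.single j 1) (Pi.single i 1) *
            ((χ (Pi.single i 1) (Pi.single p 1) * χ (Pi.single p 1) (Pi.single i 1)) ^ (-(C p j)) *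
              ((χ (Pi.single j 1) (Pi.single p 1) * χ (Pi.single p 1) (Pi.single j 1)) ^ (-(C p i)) *
                (χ (Pi.single p 1) (Pi.single p 1) ^ (C p i * C p j) *
                  χ (Pi.single p 1) (Pi.single p 1) ^ (C p j * C p i)))) := by
          rw [mul_zpow, mul_zpow]
          simp [mul_comm, mul_left_comm, mul_assoc]
      _ = χ (Pi.single i 1) (Pi.single j 1) * χ (Pi.single j 1) (Pi.single i 1) := by
          rw [hc i, hc j, key, mul_one]
  refine ⟨hA, hB, ?_, ?_⟩
  · intro i j
    rw [hA i, hB i j]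
    exact hCartan i j
  · intro i m hm
    rw [hA i]
    exact hqnum i m hm
end

section
/- Let C be a Cartan scheme with root system R of type C. Then for all a ∈ A and i, j ∈ I with i ≠ j, one has -c^a_{ij} = max{m ∈ ℕ₀ : α_j + m α_i ∈ R^a_+}. -/
/-- Let `C` be a Cartan scheme (index set `I`, objects `A`, involutions `r_i`, generalized
Cartan matrices `C^a` with `c^{r_i(a)}_{ij} = c^a_{ij}`) and `R` a root system of type `C`
(axioms (R1)–(R4)). Then for all `a ∈ A` and `i ≠ j`,
`-c^a_{ij} = max{m ∈ ℕ₀ : α_j + m α_i ∈ R^a_+}`. -/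
theorem stmt_8 {I A : Type*} [Fintype I] [DecidableEq I] [Nonempty I] [Nonempty A]
    (r : I → A → A) (C : A → I → I → ℤ)
    (hdiag : ∀ a i, C a i i = 2)
    (hoff : ∀ a j l, j ≠ l → C a j l ≤ 0)
    (hzero : ∀ a i j, C a i j = 0 → C a j i = 0)
    (hC1 : ∀ i a, r i (r i a) = a)
    (hC2 : ∀ a i j, C (r i a) i j = C a i j)
    (R : A → Set (I → ℤ))
    (Rplus : A → Set (I → ℤ))
    (hRplus : ∀ a, Rplus a = R a ∩ {x | ∀ i, 0 ≤ x i})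
    (hR1 : ∀ a, R a = Rplus a ∪ (-Rplus a))
    (hR2 : ∀ a i, R a ∩ {x | ∃ z : ℤ, x = z • Pi.single i 1}
        = {Pi.single i 1, -Pi.single i 1})
    (hR3 : ∀ a i,
      (fun x => x - (∑ j, C a i j * x j) • Pi.single i 1) '' R a = R (r i a))
    (hR4 : ∀ a i j, i ≠ j →
      ∀ h : (R a ∩ {x | ∃ m₁ m₂ : ℕ,
          x = (m₁ : ℤ) • Pi.single i 1 + (m₂ : ℤ) • Pi.single j 1}).Finite,
        (r i ∘ r j)^[h.toFinset.card] a = a) :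
    ∀ a : A, ∀ i j : I, i ≠ j →
      IsGreatest {m : ℕ | Pi.single j 1 + (m : ℤ) • Pi.single i 1 ∈ Rplus a}
        (-(C a i j)).toNat := by
  intro a i j hij
  have hq0 : 0 ≤ -(C a i j) := by have := hoff a i j hij; omega
  have hqcast : ((-(C a i j)).toNat : ℤ) = -(C a i j) := Int.toNat_of_nonneg hq0
  have hmem : ∀ b : A, ∀ l : I, (Pi.single l 1 : I → ℤ) ∈ R b := by
    intro b l
    have h : (Pi.single l 1 : I → ℤ) ∈ R b ∩ {x | ∃ z : ℤ, x = z • Pi.single l 1} := by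
      rw [hR2]; left; rfl
    exact h.1
  constructor
  · -- membership
    have h2 := hR3 (r i a) i
    rw [hC1] at h2
    have h3 : ((Pi.single j 1 : I → ℤ)
        - (∑ k, C (r i a) i k * (Pi.single j 1 : I → ℤ) k) • Pi.single i 1) ∈ R a := by
      rw [← h2]; exact ⟨_, hmem _ j, rfl⟩
    have hsum : (∑ k, C (r i a) i k * (Pi.single j 1 : I → ℤ) k) = C a i j := by
      simp [Pi.single_apply, mul_ite, hC2]
    rw [hsum] at h3
    have heq : (Pi.single j 1 + ((-(C a i j)).toNat : ℤ) • Pi.single i 1 : I → ℤ)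
        = Pi.single j 1 - (C a i j) • Pi.single i 1 := by
      rw [hqcast]; funext k; simp; ring
    rw [hRplus]
    refine ⟨by rw [heq]; exact h3, ?_⟩
    intro k
    simp only [Pi.add_apply, Pi.smul_apply, smul_eq_mul, Pi.single_apply]
    rcases eq_or_ne k i with h | h <;> rcases eq_or_ne k j with h' | h' <;>
      simp [h, h', hij] <;> omega
  · -- upper bound
    intro m hm
    simp only [Set.mem_setOf_eq] at hm
    rw [hRplus] at hm
    set x : I → ℤ := Pi.single j 1 + (m : ℤ) • Pi.single i 1 with hxdef
    have hx : x ∈ R a := hm.1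
    have hxk : ∀ k, x k = (if k = j then 1 else 0) + (if k = i then (m : ℤ) else 0) := by
      intro k
      simp only [hxdef, Pi.add_apply, Pi.smul_apply, smul_eq_mul, Pi.single_apply]
      rcases eq_or_ne k i with h | h <;> rcases eq_or_ne k j with h' | h' <;>
        simp [h, h', hij]
    have h3 : (x - (∑ k, C a i k * x k) • Pi.single i 1) ∈ R (r i a) := by
      rw [← hR3 a i]; exact ⟨_, hx, rfl⟩
    have hsum : (∑ k, C a i k * x k) = C a i j + 2 * m := by
      have : ∀ k, C a i k * x k
          = (if k = j then C a i k else 0) + (if k = i then (m : ℤ) * C a i k else 0) := by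
        intro k
        rw [hxk k]
        rcases eq_or_ne k i with h | h <;> rcases eq_or_ne k j with h' | h' <;>
          simp [h, h', hij, Ne.symm hij] <;> ring
      rw [Finset.sum_congr rfl fun k _ => this k, Finset.sum_add_distrib]
      simp [hdiag, hij.symm]; ring
    rw [hsum] at h3
    rw [hR1] at h3
    rcases h3 with h3 | h3
    · rw [hRplus] at h3
      have h4 := h3.2 i
      simp only [Pi.sub_apply, Pi.smul_apply, smul_eq_mul, Pi.single_apply,
        hxk i, if_neg (Ne.symm hij), if_pos rfl, if_true] at h4
      rw [if_neg hij] at h4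
      omega
    · rw [Set.mem_neg, hRplus] at h3
      have h4 := h3.2 j
      simp only [Pi.neg_apply, Pi.sub_apply, Pi.smul_apply, smul_eq_mul, Pi.single_apply,
        hxk j, if_pos rfl, if_neg (Ne.symm hij)] at h4
      norm_num at h4
end

section
/- Let χ be a bicharacter on ℤ^I, p ∈ I, and let b = min{m ∈ ℕ : [m]_{χ(α_p,α_p)} = 0} be finite. Assume χ is p-finite. Then for all β ∈ ℤ^I, χ(α_p, β)^{b-1} χ(β, α_p)^{b-1} = ρ^{r_p(χ)}(s_p^χ(β)) / ρ^χ(β), where ρ^χ : ℤ^I → kˣ is the group homomorphism with ρ^χ(α_i) = χ(α_i, α_i) for all i ∈ I. -/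
private def homOf {G : Type*} [CommGroup G] {I : Type*}
    (f : (I → ℤ) → G) (hf : ∀ a b, f (a + b) = f a * f b) : (I → ℤ) →+ Additive G where
  toFun x := Additive.ofMul (f x)
  map_zero' := by
    have h := hf 0 0
    rw [add_zero] at h
    have h0 : f 0 = 1 := left_eq_mul.mp h
    simp [h0]
  map_add' x y := by simp [hf]

private lemma homOf_zsmul {G : Type*} [CommGroup G] {I : Type*}
    (f : (I → ℤ) → G) (hf : ∀ a b, f (a + b) = f a * f b) (x : I → ℤ) (n : ℤ) :
    f (n • x) = f x ^ n := by
  have h := map_zsmul (homOf f hf) n x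
  simpa [homOf, toMul_zsmul] using congrArg Additive.toMul h

private lemma expand_prod {G : Type*} [CommGroup G] {I : Type*} [Fintype I] [DecidableEq I]
    (f : (I → ℤ) → G) (hf : ∀ a b, f (a + b) = f a * f b) (β : I → ℤ) :
    f β = ∏ j, f (Pi.single j 1) ^ (β j) := by
  have hβ : (∑ j, β j • Pi.single j (1:ℤ)) = β := by
    funext i
    simp [Pi.single_apply, Finset.sum_apply]
  have h := map_sum (homOf f hf) (fun j => β j • Pi.single j (1:ℤ)) Finset.univ
  rw [hβ] at h
  calc f β = Additive.toMul (homOf f hf β) := rfl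
    _ = Additive.toMul (∑ j, homOf f hf (β j • Pi.single j (1:ℤ))) := by rw [← h]
    _ = ∏ j, f (β j • Pi.single j (1:ℤ)) := by rw [toMul_sum]; rfl
    _ = ∏ j, f (Pi.single j 1) ^ (β j) := by
        exact Finset.prod_congr rfl fun j _ => homOf_zsmul f hf _ _

private lemma bichar_self {G : Type*} [CommGroup G] {I : Type*} (χ : (I→ℤ)→(I→ℤ)→G)
    (h1 : ∀ a b c, χ (a+b) c = χ a c * χ b c) (h2 : ∀ c a b, χ c (a+b) = χ c a * χ c b)
    (A P : I → ℤ) (n : ℤ) :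
    χ (A + n • P) (A + n • P) = χ A A * χ A P ^ n * (χ P A ^ n * χ P P ^ (n*n)) := by
  rw [h1, h2, h2]
  congr 1
  · congr 1
    exact homOf_zsmul (fun x => χ A x) (h2 _) _ _
  · rw [homOf_zsmul (fun x => χ x A) (fun a b => h1 a b _) _ _,
      homOf_zsmul (fun x => χ x (n • P)) (fun a b => h1 a b _) _ _,
      homOf_zsmul (fun x => χ P x) (h2 _) _ _, ← zpow_mul]

private lemma zpow_sum' {G : Type*} [CommGroup G] (a : G) {ι : Type*} (s : Finset ι) (f : ι → ℤ) :
    a ^ (∑ i ∈ s, f i) = ∏ i ∈ s, a ^ f i := by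
  induction s using Finset.cons_induction with
  | empty => simp
  | cons i s hi ih => rw [Finset.sum_cons, Finset.prod_cons, zpow_add, ih]



/-- Let `χ` be a bicharacter on `ℤ^I`, `p ∈ I`, and `b = min{m ∈ ℕ : [m]_{χ(α_p,α_p)} = 0}`
finite. Assume `χ` is `p`-finite with Cartan entries `c j = c_{pj}^χ` and let
`s_p(α_j) = α_j - c_{pj} α_p` (an involution), `r_p(χ)(a,b) = χ(s_p a, s_p b)`.
Then for all `β ∈ ℤ^I`,
`χ(α_p,β)^{b-1} χ(β,α_p)^{b-1} = ρ^{r_p(χ)}(s_p β) / ρ^χ(β)`,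
where `ρ^χ` is the homomorphism `ℤ^I → kˣ` with `ρ^χ(α_i) = χ(α_i,α_i)`, i.e.
`ρ^χ(β) = ∏_i χ(α_i,α_i)^{β_i}`. -/
theorem stmt_9 {k : Type*} [Field k] {I : Type*} [Fintype I] [DecidableEq I] [Nonempty I]
    (χ : (I → ℤ) → (I → ℤ) → kˣ)
    (h1 : ∀ a b c : I → ℤ, χ (a + b) c = χ a c * χ b c)
    (h2 : ∀ c a b : I → ℤ, χ c (a + b) = χ c a * χ c b)
    (p : I)
    (b : ℕ) (hb1 : 1 ≤ b)
    (hbzero : (∑ l ∈ Finset.range b,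
        ((χ (Pi.single p 1) (Pi.single p 1) : kˣ) : k) ^ l) = 0)
    (hbmin : ∀ m : ℕ, 1 ≤ m → m < b →
      (∑ l ∈ Finset.range m,
        ((χ (Pi.single p 1) (Pi.single p 1) : kˣ) : k) ^ l) ≠ 0)
    (c : I → ℤ)
    (hcp : c p = 2)
    (hcle : ∀ j, j ≠ p → c j ≤ 0)
    (hcmin : ∀ j, j ≠ p →
      (∑ l ∈ Finset.range ((-c j).toNat + 1),
          ((χ (Pi.single p 1) (Pi.single p 1) : kˣ) : k) ^ l) *
        (((χ (Pi.single p 1) (Pi.single p 1) : kˣ) : k) ^ (-c j).toNat *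
            ((χ (Pi.single p 1) (Pi.single j 1) : kˣ) : k) *
            ((χ (Pi.single j 1) (Pi.single p 1) : kˣ) : k) - 1) = 0)
    (hcmin' : ∀ j, j ≠ p → ∀ m : ℕ, (m : ℤ) < -c j →
      (∑ l ∈ Finset.range (m + 1),
          ((χ (Pi.single p 1) (Pi.single p 1) : kˣ) : k) ^ l) *
        (((χ (Pi.single p 1) (Pi.single p 1) : kˣ) : k) ^ m *
            ((χ (Pi.single p 1) (Pi.single j 1) : kˣ) : k) *
            ((χ (Pi.single j 1) (Pi.single p 1) : kˣ) : k) - 1) ≠ 0)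
    (s : (I → ℤ) → (I → ℤ))
    (hs : ∀ x, s x = x - (∑ j, c j * x j) • Pi.single p 1) :
    ∀ β : I → ℤ,
      χ (Pi.single p 1) β ^ (b - 1) * χ β (Pi.single p 1) ^ (b - 1)
        = (∏ i, χ (s (Pi.single i 1)) (s (Pi.single i 1)) ^ (s β i)) /
            (∏ i, χ (Pi.single i 1) (Pi.single i 1) ^ (β i)) := by
  -- Step 1: Q^b = 1
  have hQb : ((χ (Pi.single p 1) (Pi.single p 1) : kˣ) : k) ^ b = 1 := by
    by_cases hx1 : ((χ (Pi.single p 1) (Pi.single p 1) : kˣ) : k) = 1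
    · simp [hx1]
    · rw [geom_sum_eq hx1] at hbzero
      have hb2 : ((χ (Pi.single p 1) (Pi.single p 1) : kˣ) : k) - 1 ≠ 0 := sub_ne_zero.mpr hx1
      have h3 := (div_eq_zero_iff.mp hbzero).resolve_right hb2
      exact sub_eq_zero.mp h3
  have hQbu : (χ (Pi.single p 1) (Pi.single p 1)) ^ b = 1 :=
    Units.ext (by rw [Units.val_pow_eq_pow_val, hQb, Units.val_one])
  have hQbz : (χ (Pi.single p 1) (Pi.single p 1)) ^ (b : ℤ) = 1 := by
    rw [zpow_natCast]; exact hQbu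
  have hcongr : ∀ A B n : ℤ, A = B + (b:ℤ) * n →
      (χ (Pi.single p 1) (Pi.single p 1)) ^ A = (χ (Pi.single p 1) (Pi.single p 1)) ^ B := by
    intro A B n h
    rw [h, zpow_add, zpow_mul, hQbz, one_zpow, mul_one]
  -- Step 2: per-generator key identity
  have key : ∀ j, (χ (Pi.single p 1) (Pi.single j 1) * χ (Pi.single j 1) (Pi.single p 1)) ^ ((b:ℤ) - 1)
      = (χ (Pi.single p 1) (Pi.single j 1) * χ (Pi.single j 1) (Pi.single p 1)) ^ (-c j)
        * (χ (Pi.single p 1) (Pi.single p 1)) ^ (c j * c j - c j) := by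
    intro j
    by_cases hjp : j = p
    · subst hjp
      rw [hcp, mul_zpow, mul_zpow, ← zpow_add, ← zpow_add, ← zpow_add]
      exact hcongr _ _ 2 (by push_cast; ring)
    · have hcj0 : c j ≤ 0 := hcle j hjp
      have hm : (((-c j).toNat : ℤ)) = -c j := Int.toNat_of_nonneg (by omega)
      rcases mul_eq_zero.mp (hcmin j hjp) with h0 | h0
      · have hmb : (-c j).toNat + 1 = b := by
          rcases lt_trichotomy ((-c j).toNat + 1) b with hlt | he | hgt
          · exact absurd h0 (hbmin _ (by omega) hlt)
          · exact he
          · exfalso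
            apply hcmin' j hjp (b-1) (by omega)
            rw [show b - 1 + 1 = b from by omega, hbzero, zero_mul]
        have e1 : (b:ℤ) - 1 = -c j := by omega
        have e2 : c j * c j - c j = (b:ℤ) * (-c j) := by
          have : (b : ℤ) = -c j + 1 := by omega
          rw [this]; ring
        rw [e1, e2, zpow_mul, hQbz, one_zpow, mul_one]
      · have hk : ((χ (Pi.single p 1) (Pi.single p 1) : kˣ) : k) ^ (-c j).toNat *
            ((χ (Pi.single p 1) (Pi.single j 1) : kˣ) : k) *
            ((χ (Pi.single j 1) (Pi.single p 1) : kˣ) : k) = 1 := sub_eq_zero.mp h0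
        have hu : χ (Pi.single p 1) (Pi.single p 1) ^ ((-c j).toNat) *
            (χ (Pi.single p 1) (Pi.single j 1) * χ (Pi.single j 1) (Pi.single p 1)) = 1 := by
          apply Units.ext
          simp only [Units.val_mul, Units.val_pow_eq_pow_val, Units.val_one]
          rw [← mul_assoc]
          exact hk
        have huu : (χ (Pi.single p 1) (Pi.single j 1) * χ (Pi.single j 1) (Pi.single p 1))
            = (χ (Pi.single p 1) (Pi.single p 1)) ^ (-(((-c j).toNat : ℤ))) := by
          rw [zpow_neg, zpow_natCast]
          exact (mul_eq_one_iff_inv_eq.mp hu).symm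
        rw [huu, ← zpow_mul, ← zpow_mul, ← zpow_add]
        apply hcongr _ _ (-(((-c j).toNat : ℤ)))
        linear_combination (1 - c j) * hm
  -- Step 3: structure of s on basis vectors
  have hsingle_sum : ∀ j : I, (∑ i, c i * (Pi.single j 1 : I → ℤ) i) = c j := by
    intro j
    simp [Pi.single_apply]
  have hsj : ∀ j, s (Pi.single j 1) = Pi.single j 1 + (-c j) • Pi.single p 1 := by
    intro j
    rw [hs, hsingle_sum j, sub_eq_add_neg, ← neg_smul]
  have hXj : ∀ j, χ (s (Pi.single j 1)) (s (Pi.single j 1))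
      = χ (Pi.single j 1) (Pi.single j 1)
        * χ (Pi.single j 1) (Pi.single p 1) ^ (-c j)
        * (χ (Pi.single p 1) (Pi.single j 1) ^ (-c j)
        * χ (Pi.single p 1) (Pi.single p 1) ^ ((-c j) * (-c j))) := by
    intro j
    rw [hsj j]
    exact bichar_self χ h1 h2 _ _ _
  -- Step 4: assembly
  intro β
  have hbnat : ((b - 1 : ℕ) : ℤ) = (b:ℤ) - 1 := by omega
  have hL1 : χ (Pi.single p 1) β = ∏ j, χ (Pi.single p 1) (Pi.single j 1) ^ β j :=
    expand_prod _ (h2 _) β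
  have hL2 : χ β (Pi.single p 1) = ∏ j, χ (Pi.single j 1) (Pi.single p 1) ^ β j :=
    expand_prod (fun x => χ x (Pi.single p 1)) (fun a b => h1 a b _) β
  have hLHS : χ (Pi.single p 1) β ^ (b - 1) * χ β (Pi.single p 1) ^ (b - 1)
      = ∏ j, ((χ (Pi.single p 1) (Pi.single j 1) * χ (Pi.single j 1) (Pi.single p 1))
          ^ ((b:ℤ) - 1)) ^ (β j) := by
    rw [hL1, hL2, ← Finset.prod_pow, ← Finset.prod_pow, ← Finset.prod_mul_distrib]
    apply Finset.prod_congr rfl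
    intro j _
    simp only [← zpow_natCast, ← zpow_mul, mul_zpow, hbnat]
    rw [mul_comm (β j) ((b:ℤ)-1)]
  have hβs : ∀ i, s β i = β i - (∑ j, c j * β j) * (Pi.single p 1 : I → ℤ) i := by
    intro i
    rw [hs]
    simp [smul_eq_mul]
  have hXp : χ (s (Pi.single p 1)) (s (Pi.single p 1)) = χ (Pi.single p 1) (Pi.single p 1) := by
    rw [hXj p, hcp]
    group
  have hXsplit : (∏ i, χ (s (Pi.single i 1)) (s (Pi.single i 1)) ^ (s β i))
      = (∏ i, χ (s (Pi.single i 1)) (s (Pi.single i 1)) ^ (β i))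
        * χ (Pi.single p 1) (Pi.single p 1) ^ (-(∑ j, c j * β j)) := by
    rw [← Finset.mul_prod_erase Finset.univ
        (fun i => χ (s (Pi.single i 1)) (s (Pi.single i 1)) ^ (s β i)) (Finset.mem_univ p),
      ← Finset.mul_prod_erase Finset.univ
        (fun i => χ (s (Pi.single i 1)) (s (Pi.single i 1)) ^ (β i)) (Finset.mem_univ p)]
    have he : ∀ i ∈ Finset.univ.erase p,
        χ (s (Pi.single i 1)) (s (Pi.single i 1)) ^ (s β i)
          = χ (s (Pi.single i 1)) (s (Pi.single i 1)) ^ (β i) := by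
      intro i hi
      rw [hβs i, Pi.single_eq_of_ne (Finset.ne_of_mem_erase hi), mul_zero, sub_zero]
    rw [Finset.prod_congr rfl he]
    have hp' : s β p = β p + (-(∑ j, c j * β j)) := by
      rw [hβs p, Pi.single_eq_same, mul_one, sub_eq_add_neg]
    rw [hp', zpow_add, hXp]
    exact mul_right_comm _ _ _
  have hQsum : χ (Pi.single p 1) (Pi.single p 1) ^ (-(∑ j, c j * β j))
      = ∏ j, (χ (Pi.single p 1) (Pi.single p 1) ^ (-c j)) ^ (β j) := by
    have hnegS : (-(∑ j, c j * β j)) = ∑ j, (-c j) * β j := by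
      rw [← Finset.sum_neg_distrib]
      exact Finset.sum_congr rfl fun j _ => by ring
    rw [hnegS, zpow_sum']
    exact Finset.prod_congr rfl fun j _ => by rw [zpow_mul]
  rw [hLHS, hXsplit, hQsum, ← Finset.prod_mul_distrib, ← Finset.prod_div_distrib]
  apply Finset.prod_congr rfl
  intro j _
  rw [key j, hXj j, ← mul_zpow, ← div_zpow]
  congr 1
  apply Units.ext
  push_cast
  simp only [mul_zpow, zpow_sub, zpow_add, zpow_neg]
  field_simp
  rw [zpow_sub₀ (Units.ne_zero _)]
  field_simp
  have hne : ∀ (u : kˣ) (n : ℤ), ((u:k)) ^ n ≠ 0 := fun u n => zpow_ne_zero n (Units.ne_zero u)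
  rw [neg_mul_neg]
end

section
/- Let B be a commutative integral domain, x an indeterminate, k ∈ ℕ, and X ∈ M_k(B[x]). Then there exist s ∈ {0,1,…,k}, matrices D₁, D₂ ∈ M_k(B) with det D₁ ≠ 0 and det D₂ ≠ 0, a matrix D₀ ∈ M_k(B[x]), and b ∈ B \ {0} such that D₁ X D₂ = x·D₀ + b·diag(1,…,1,0,…,0) with s ones on the diagonal. -/
open Classical in
lemma exists_perm_indicator {k : ℕ} (p : Fin k → Prop) [DecidablePred p] :
    ∃ σ : Equiv.Perm (Fin k), ∀ j, p (σ j) ↔ (j : ℕ) < Fintype.card {i // p i} := by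
  set s := Fintype.card {i // p i} with hs
  set t := Fintype.card {i // ¬ p i} with ht
  have h : s + t = k := by
    have h2 := Fintype.card_congr (Equiv.sumCompl p)
    rw [Fintype.card_sum, Fintype.card_fin] at h2
    exact h2
  let e1 : Fin s ≃ {i // p i} := (Fintype.equivFin _).symm
  let e2 : Fin t ≃ {i // ¬ p i} := (Fintype.equivFin _).symm
  refine ⟨((finCongr h.symm).trans finSumFinEquiv.symm).trans
    ((e1.sumCongr e2).trans (Equiv.sumCompl p)), fun j => ?_⟩
  by_cases hj : (j : ℕ) < s
  · have h1 : finSumFinEquiv.symm (finCongr h.symm j) = Sum.inl ⟨j, hj⟩ := by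
      rw [Equiv.symm_apply_eq]
      ext
      simp
    simp only [Equiv.trans_apply, h1, Equiv.sumCongr_apply, Sum.map_inl,
      Equiv.sumCompl_apply_inl]
    exact iff_of_true (e1 ⟨j, hj⟩).prop hj
  · have hjk : (j : ℕ) - s < t := by omega
    have h1 : finSumFinEquiv.symm (finCongr h.symm j) = Sum.inr ⟨(j : ℕ) - s, hjk⟩ := by
      rw [Equiv.symm_apply_eq]
      ext
      simp
      omega
    simp only [Equiv.trans_apply, h1, Equiv.sumCongr_apply, Sum.map_inr,
      Equiv.sumCompl_apply_inr]
    exact iff_of_false (e2 ⟨_, hjk⟩).prop hj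

lemma perm_mul_helper {k : ℕ} {K : Type*} [CommRing K] (σ : Equiv.Perm (Fin k))
    (A : Matrix (Fin k) (Fin k) K) :
    (1 : Matrix (Fin k) (Fin k) K).submatrix σ id * A = A.submatrix σ id := by
  have := Matrix.submatrix_mul_equiv (1 : Matrix (Fin k) (Fin k) K) A σ (Equiv.refl _) id
  simpa using this

lemma mul_perm_helper {k : ℕ} {K : Type*} [CommRing K] (σ : Equiv.Perm (Fin k))
    (A : Matrix (Fin k) (Fin k) K) :
    A * (1 : Matrix (Fin k) (Fin k) K).submatrix id σ = A.submatrix id σ := by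
  have := Matrix.submatrix_mul_equiv A (1 : Matrix (Fin k) (Fin k) K) id (Equiv.refl _) σ
  simpa using this



/-- Let `B` be an integral domain, `x` an indeterminate, `k ∈ ℕ`, `X ∈ M_k(B[x])`.
Then there exist `s ≤ k`, `D₁, D₂ ∈ M_k(B)` with nonzero determinants,
`D₀ ∈ M_k(B[x])` and `b ∈ B \ {0}` with
`D₁ X D₂ = x·D₀ + b·diag(1,…,1,0,…,0)` (`s` ones). -/
theorem stmt_10 {B : Type*} [CommRing B] [IsDomain B] (k : ℕ)
    (X : Matrix (Fin k) (Fin k) (Polynomial B)) :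
    ∃ (s : ℕ) (_ : s ≤ k) (D₁ D₂ : Matrix (Fin k) (Fin k) B)
      (D₀ : Matrix (Fin k) (Fin k) (Polynomial B)) (b : B),
      D₁.det ≠ 0 ∧ D₂.det ≠ 0 ∧ b ≠ 0 ∧
      (D₁.map (Polynomial.C)) * X * (D₂.map (Polynomial.C))
        = (Polynomial.X : Polynomial B) • D₀ +
            Polynomial.C b •
              Matrix.diagonal (fun i : Fin k => if (i : ℕ) < s then (1 : Polynomial B) else 0) := by
    classical
  let K := FractionRing B
  let f : B →+* K := algebraMap B K
  have hf : Function.Injective f := IsFractionRing.injective B K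
  set X₀ : Matrix (Fin k) (Fin k) B := X.map Polynomial.constantCoeff with hX₀
  set M : Matrix (Fin k) (Fin k) K := X₀.map f with hM
  obtain ⟨L, L', d, hLL⟩ :=
    Matrix.Pivot.exists_list_transvec_mul_mul_list_transvec_eq_diagonal M
  set P0 := (L.map Matrix.TransvectionStruct.toMatrix).prod with hP0
  set Q0 := (L'.map Matrix.TransvectionStruct.toMatrix).prod with hQ0
  set E : Matrix (Fin k) (Fin k) K :=
    Matrix.diagonal (fun i => if d i = 0 then 1 else (d i)⁻¹) with hE
  obtain ⟨σ, hσ⟩ := exists_perm_indicator (fun i => d i ≠ 0)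
  set s := Fintype.card {i // d i ≠ 0} with hscard
  have hsk : s ≤ k :=
    le_trans (Fintype.card_subtype_le _) (Fintype.card_fin k).le
  set Pσ : Matrix (Fin k) (Fin k) K := (1 : Matrix _ _ K).submatrix σ id with hPσ
  set Qσ : Matrix (Fin k) (Fin k) K := (1 : Matrix _ _ K).submatrix id σ with hQσ
  set P := Pσ * P0 with hP
  set Q := Q0 * (E * Qσ) with hQ
  have hsign : ((Equiv.Perm.sign σ : ℤ) : K) ≠ 0 := by
    rcases Int.units_eq_one_or (Equiv.Perm.sign σ) with h | h <;> simp [h]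
  have hPdet : P.det ≠ 0 := by
    rw [hP, Matrix.det_mul, hPσ, Matrix.det_permute, hP0,
      Matrix.TransvectionStruct.det_toMatrix_prod]
    simpa using hsign
  have hEdet : E.det ≠ 0 := by
    rw [hE, Matrix.det_diagonal]
    refine Finset.prod_ne_zero_iff.mpr fun i _ => ?_
    by_cases h : d i = 0 <;> simp [h, inv_ne_zero]
  have hQdet : Q.det ≠ 0 := by
    rw [hQ, Matrix.det_mul, Matrix.det_mul, hQ0,
      Matrix.TransvectionStruct.det_toMatrix_prod, hQσ, Matrix.det_permute']
    simpa using ⟨hEdet, hsign⟩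
  have hPMQ : P * M * Q =
      Matrix.diagonal (fun j : Fin k => if (j : ℕ) < s then (1 : K) else 0) := by
    have h1 : P * M * Q = Pσ * (P0 * M * Q0) * E * Qσ := by
      rw [hP, hQ]; noncomm_ring
    rw [h1, hLL]
    have h2 : Matrix.diagonal d * E =
        Matrix.diagonal (fun i => if d i = 0 then (0 : K) else 1) := by
      rw [hE, Matrix.diagonal_mul_diagonal]
      ext i j
      rcases eq_or_ne i j with rfl | hij
      · by_cases h : d i = 0 <;> simp [Matrix.diagonal_apply_eq, h] <;> exact mul_inv_cancel₀ (G₀ := K) h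
      · simp [Matrix.diagonal_apply_ne _ hij]
    have h3 : Pσ * Matrix.diagonal d * E * Qσ = Pσ * (Matrix.diagonal d * E) * Qσ := by
      rw [mul_assoc Pσ]
    rw [h3, h2, hPσ, hQσ, perm_mul_helper, mul_perm_helper, Matrix.submatrix_submatrix]
    rw [show ((σ : Fin k → Fin k) ∘ id) = (σ : Fin k → Fin k) from rfl,
      show (id ∘ (σ : Fin k → Fin k)) = (σ : Fin k → Fin k) from rfl]
    rw [Matrix.submatrix_diagonal_equiv]
    ext i j
    rcases eq_or_ne i j with rfl | hij
    · by_cases hj : (i : ℕ) < s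
      · have hd : d (σ i) ≠ 0 := (hσ i).mpr hj
        simp [Function.comp, hd, hj]
      · have hd : d (σ i) = 0 := not_not.mp fun h => hj ((hσ i).mp h)
        simp [Function.comp, hd, hj]
    · simp [Matrix.diagonal_apply_ne _ hij]
  -- clear denominators of P
  obtain ⟨b₁, hb₁⟩ := IsLocalization.exist_integer_multiples_of_finite
    (nonZeroDivisors B) (fun ij : Fin k × Fin k => P ij.1 ij.2)
  obtain ⟨b₂, hb₂⟩ := IsLocalization.exist_integer_multiples_of_finite
    (nonZeroDivisors B) (fun ij : Fin k × Fin k => Q ij.1 ij.2)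
  choose D₁e hD₁e using fun ij => hb₁ ij
  choose D₂e hD₂e using fun ij => hb₂ ij
  set D₁ : Matrix (Fin k) (Fin k) B := Matrix.of fun i j => D₁e (i, j) with hD₁
  set D₂ : Matrix (Fin k) (Fin k) B := Matrix.of fun i j => D₂e (i, j) with hD₂
  have hfb₁ : f (b₁ : B) ≠ 0 := fun h => nonZeroDivisors.coe_ne_zero b₁ (hf (by simpa using h))
  have hfb₂ : f (b₂ : B) ≠ 0 := fun h => nonZeroDivisors.coe_ne_zero b₂ (hf (by simpa using h))
  have hD₁map : D₁.map f = f (b₁ : B) • P := by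
    ext i j
    simp only [hD₁, Matrix.map_apply, Matrix.of_apply, Matrix.smul_apply, smul_eq_mul]
    rw [hD₁e (i, j)]
    simp [Algebra.smul_def, f]
  have hD₂map : D₂.map f = f (b₂ : B) • Q := by
    ext i j
    simp only [hD₂, Matrix.map_apply, Matrix.of_apply, Matrix.smul_apply, smul_eq_mul]
    rw [hD₂e (i, j)]
    simp [Algebra.smul_def, f]
  have hdet1 : D₁.det ≠ 0 := by
    intro h
    have : f D₁.det = (D₁.map f).det := RingHom.map_det f D₁
    rw [h, map_zero, hD₁map, Matrix.det_smul] at this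
    exact (mul_ne_zero (pow_ne_zero _ hfb₁) hPdet) this.symm
  have hdet2 : D₂.det ≠ 0 := by
    intro h
    have : f D₂.det = (D₂.map f).det := RingHom.map_det f D₂
    rw [h, map_zero, hD₂map, Matrix.det_smul] at this
    exact (mul_ne_zero (pow_ne_zero _ hfb₂) hQdet) this.symm
  set b : B := (b₁ : B) * (b₂ : B) with hb
  have hbne : b ≠ 0 :=
    mul_ne_zero (nonZeroDivisors.coe_ne_zero b₁) (nonZeroDivisors.coe_ne_zero b₂)
  set eB : Fin k → B := fun i => if (i : ℕ) < s then (1 : B) else 0 with heB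
  have hKeq : (D₁ * X₀ * D₂).map f = (b • Matrix.diagonal eB).map f := by
    rw [Matrix.map_mul, Matrix.map_mul, hD₁map, hD₂map, ← hM]
    have h3 : f (b₁ : B) • P * M * (f (b₂ : B) • Q) =
        (f (b₁ : B) * f (b₂ : B)) • (P * M * Q) := by
      rw [Matrix.smul_mul, Matrix.smul_mul, Matrix.mul_smul, mul_smul]
    rw [h3, hPMQ]
    ext i j
    rcases eq_or_ne i j with rfl | hij
    · by_cases hs : (i : ℕ) < s <;>
        simp [heB, hb, Matrix.diagonal_apply_eq, hs, map_mul, f]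
    · simp [Matrix.diagonal_apply_ne _ hij, hij]
  have hBeq : D₁ * X₀ * D₂ = b • Matrix.diagonal eB := by
    ext i j
    apply hf
    have := congrArg (fun A : Matrix (Fin k) (Fin k) K => A i j) hKeq
    simpa [Matrix.map_apply] using this
  set Y := D₁.map Polynomial.C * X * D₂.map Polynomial.C with hY
  have hY0 : Y.map (Polynomial.constantCoeff) = b • Matrix.diagonal eB := by
    rw [hY, Matrix.map_mul, Matrix.map_mul, ← hBeq, hX₀]
    congr 1
    · congr 1
      rw [Matrix.map_map]
      convert Matrix.map_id D₁
      funext p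
      simp
    · rw [Matrix.map_map]
      convert Matrix.map_id D₂
      funext p
      simp
  refine ⟨s, hsk, D₁, D₂, Y.map Polynomial.divX, b, hdet1, hdet2, hbne, ?_⟩
  rw [← hY]
  refine Matrix.ext fun i j => ?_
  have h1 := Polynomial.X_mul_divX_add (Y i j)
  have h2 : (Y i j).coeff 0 = b * Matrix.diagonal eB i j := by
    have := congrArg (fun A : Matrix (Fin k) (Fin k) B => A i j) hY0
    simpa [Matrix.map_apply, Polynomial.constantCoeff_apply] using this
  have key : Y i j = Polynomial.X * (Y i j).divX +
      Polynomial.C b * (Matrix.diagonal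
        (fun i : Fin k => if (i : ℕ) < s then (1 : Polynomial B) else 0)) i j := by
    conv_lhs => rw [← h1]
    rw [h2]
    congr 1
    rcases eq_or_ne i j with rfl | hij
    · by_cases hs : (i : ℕ) < s <;> simp [heB, hs]
    · simp [Matrix.diagonal_apply_ne _ hij]
  rw [Matrix.add_apply, Matrix.smul_apply, Matrix.smul_apply, Matrix.map_apply,
    smul_eq_mul, smul_eq_mul]
  exact key
end

section
/- Let 𝕂 be an algebraically closed field, B a finitely generated integral domain over 𝕂, x an indeterminate, k ∈ ℕ, r ∈ {0,…,k}, and X ∈ M_k(B[x]). Suppose that for all points p in a nonempty Zariski open subset of the affine variety of B, the matrix X(0) evaluated at p has rank at most r. Then det X = x^{k-r}·b for some b ∈ B[x]. -/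
open Polynomial Matrix

/-- Field-case lemma: if the constant term matrix has rank ≤ r, then X^(k-r) ∣ det. -/
lemma det_dvd_field_aux {K : Type*} [Field K] {k r : ℕ}
    (M : Matrix (Fin k) (Fin k) (Polynomial K))
    (h : (M.map (fun p => p.coeff 0)).rank ≤ r) :
    (Polynomial.X : Polynomial K) ^ (k - r) ∣ M.det := by
  classical
  set A : Matrix (Fin k) (Fin k) K := M.map (fun p => p.coeff 0) with hA
  set Ac : Fin k → Fin k → Polynomial K := fun i j => Polynomial.C (A i j) with hAc
  set N : Fin k → Fin k → Polynomial K := fun i j => M i j - Ac i j with hN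
  have hNc0 : ∀ i j, (N i j).coeff 0 = 0 := by
    intro i j
    simp [hN, hAc, hA, Matrix.map_apply]
  have hdet : M.det = ∑ s : Finset (Fin k),
      Matrix.detRowAlternating (R := Polynomial K) (n := Fin k)
        (Matrix.of (s.piecewise N Ac)) := by
    have hM : (N + Ac : Fin k → Fin k → Polynomial K) = fun i j => M i j := by
      funext i j
      simp [hN]
    have key := (Matrix.detRowAlternating (R := Polynomial K)
        (n := Fin k)).toMultilinearMap.map_add_univ N Ac
    rw [hM] at key
    exact key
  rw [hdet]
  apply Finset.dvd_sum
  intro s _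
  by_cases hcard : k - r ≤ s.card
  · -- rows in s are divisible by X: factor X out of each
    set D : Matrix (Fin k) (Fin k) (Polynomial K) :=
      Matrix.of (fun i j => if i ∈ s then (N i j).divX else Ac i j) with hD
    set v : Fin k → Polynomial K := fun i => if i ∈ s then Polynomial.X else 1 with hv
    have key : Matrix.of (s.piecewise N Ac) = Matrix.of (fun i j => v i * D i j) := by
      refine congrArg Matrix.of (funext fun i => funext fun j => ?_)
      by_cases hi : i ∈ s
      · simp only [Matrix.of_apply, Finset.piecewise_eq_of_mem _ _ _ hi, hv, hD,
          if_pos hi]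
        have h2 := Polynomial.X_mul_divX_add (N i j)
        rw [hNc0 i j, Polynomial.C_0, add_zero] at h2
        exact h2.symm
      · simp [Finset.piecewise_eq_of_notMem _ _ _ hi, hv, hD, if_neg hi]
    show (Polynomial.X : Polynomial K) ^ (k - r) ∣
      Matrix.det (Matrix.of (s.piecewise N Ac))
    rw [key, Matrix.det_mul_column v D]
    have hprod : (∏ i, v i) = (Polynomial.X : Polynomial K) ^ s.card := by
      rw [hv, Finset.prod_ite_mem, Finset.univ_inter, Finset.prod_const]
    rw [hprod]
    exact Dvd.dvd.mul_right (pow_dvd_pow _ hcard) _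
  · -- too many constant rows: determinant vanishes
    push_neg at hcard
    have hr' : r < (sᶜ : Finset (Fin k)).card := by
      rw [Finset.card_compl, Fintype.card_fin]; omega
    have hdep : ¬ LinearIndependent (Polynomial K) (s.piecewise N Ac) := by
      intro hind
      -- restrict scalars to K
      have hinj : Function.Injective fun c : K => c • (1 : Polynomial K) := by
        intro a b hab
        have : algebraMap K (Polynomial K) a = algebraMap K (Polynomial K) b := by
          rw [Algebra.algebraMap_eq_smul_one, Algebra.algebraMap_eq_smul_one]
          exact hab
        exact (algebraMap K (Polynomial K)).injective this
      have hK : LinearIndependent K (s.piecewise N Ac) :=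
        hind.restrict_scalars hinj
      have hsub : LinearIndependent K
          (fun i : {x // x ∈ (sᶜ : Finset (Fin k))} =>
            (s.piecewise N Ac) (i : Fin k)) :=
        hK.comp _ Subtype.val_injective
      have heq : (fun i : {x // x ∈ (sᶜ : Finset (Fin k))} =>
            (s.piecewise N Ac) (i : Fin k)) =
          (LinearMap.compLeft (Algebra.linearMap K (Polynomial K)) (Fin k)) ∘
            (fun i : {x // x ∈ (sᶜ : Finset (Fin k))} => A (i : Fin k)) := by
        funext i
        have his : (i : Fin k) ∉ s := by
          exact Finset.mem_compl.mp i.2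
        funext j
        simp [Finset.piecewise_eq_of_notMem _ _ _ his, hAc, Matrix.map_apply,
          LinearMap.compLeft, Polynomial.algebraMap_eq]
        rfl
      rw [heq] at hsub
      have hA_ind : LinearIndependent K
          (fun i : {x // x ∈ (sᶜ : Finset (Fin k))} => A (i : Fin k)) :=
        LinearIndependent.of_comp _ hsub
      -- contradiction with rank A ≤ r
      have hspan : (sᶜ : Finset (Fin k)).card ≤ A.rank := by
        have h1 : Module.finrank K (Submodule.span K
            (Set.range (fun i : {x // x ∈ (sᶜ : Finset (Fin k))} => A (i : Fin k))))
            = (sᶜ : Finset (Fin k)).card := by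
          rw [finrank_span_eq_card hA_ind, Fintype.card_coe]
        have h2 : Submodule.span K
            (Set.range (fun i : {x // x ∈ (sᶜ : Finset (Fin k))} => A (i : Fin k)))
            ≤ Submodule.span K (Set.range A) := by
          apply Submodule.span_mono
          rintro - ⟨i, rfl⟩
          exact ⟨(i : Fin k), rfl⟩
        have h3 := Submodule.finrank_mono h2
        rw [h1] at h3
        rwa [Matrix.rank_eq_finrank_span_row]
      omega
    have hzero := (Matrix.detRowAlternating (R := Polynomial K)
        (n := Fin k)).map_linearDependent (s.piecewise N Ac) hdep
    show (Polynomial.X : Polynomial K) ^ (k - r) ∣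
      Matrix.detRowAlternating (R := Polynomial K) (n := Fin k)
        (Matrix.of (s.piecewise N Ac))
    rw [show Matrix.detRowAlternating (R := Polynomial K) (n := Fin k)
        (Matrix.of (s.piecewise N Ac)) =
        Matrix.detRowAlternating (R := Polynomial K) (n := Fin k)
        (s.piecewise N Ac) from rfl, hzero]
    exact dvd_zero _

/-- If `c ∈ B` vanishes at every `𝕂`-point, then `c = 0`. -/
lemma eq_zero_of_forall_algHom {𝕂 : Type*} [Field 𝕂] [IsAlgClosed 𝕂]
    {B : Type*} [CommRing B] [IsDomain B] [Algebra 𝕂 B] [Algebra.FiniteType 𝕂 B]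
    (c : B) (h : ∀ φ : B →ₐ[𝕂] 𝕂, φ c = 0) : c = 0 := by
  haveI : IsJacobsonRing B := isJacobsonRing_of_finiteType (A := 𝕂)
  have hc : c ∈ Ideal.jacobson (⊥ : Ideal B) := by
    rw [Ideal.jacobson, Ideal.mem_sInf]
    rintro m ⟨-, hm⟩
    haveI := hm
    letI : Field (B ⧸ m) := Ideal.Quotient.field m
    haveI : Algebra.FiniteType 𝕂 (B ⧸ m) :=
      Algebra.FiniteType.of_surjective
        (Ideal.Quotient.mkₐ 𝕂 m) (Ideal.Quotient.mkₐ_surjective 𝕂 m)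
    haveI : Module.Finite 𝕂 (B ⧸ m) :=
      finite_of_finite_type_of_isJacobsonRing 𝕂 (B ⧸ m)
    haveI : Algebra.IsIntegral 𝕂 (B ⧸ m) := Algebra.IsIntegral.of_finite 𝕂 (B ⧸ m)
    have hsurj : Function.Surjective (algebraMap 𝕂 (B ⧸ m)) :=
      IsAlgClosed.algebraMap_bijective_of_isIntegral.2
    have hbij : Function.Bijective (Algebra.ofId 𝕂 (B ⧸ m)) :=
      ⟨(algebraMap 𝕂 (B ⧸ m)).injective, hsurj⟩
    let e : 𝕂 ≃ₐ[𝕂] (B ⧸ m) := AlgEquiv.ofBijective _ hbij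
    let φ : B →ₐ[𝕂] 𝕂 := e.symm.toAlgHom.comp (Ideal.Quotient.mkₐ 𝕂 m)
    have hφ : φ c = 0 := h φ
    have : Ideal.Quotient.mk m c = 0 := by
      have : e (φ c) = e 0 := by rw [hφ]
      simpa [φ, AlgEquiv.apply_symm_apply] using this
    exact (Ideal.Quotient.eq_zero_iff_mem).mp this
  rw [← Ideal.radical_eq_jacobson] at hc
  have : c ∈ nilradical B := by
    rwa [nilradical]
  rw [nilradical_eq_zero] at this
  simpa using this

/-- Let `𝕂` be algebraically closed, `B` a finitely generated integral domain over `𝕂`,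
`k ∈ ℕ`, `r ≤ k`, `X ∈ M_k(B[x])`. If for all points `p` of a nonempty Zariski open subset
of the affine variety of `B` (i.e. all `𝕂`-points not vanishing on a fixed `f ≠ 0`)
the matrix `X(0)` evaluated at `p` has rank at most `r`, then
`det X = x^{k-r}·b` for some `b ∈ B[x]`. -/
theorem stmt_11 {𝕂 : Type*} [Field 𝕂] [IsAlgClosed 𝕂]
    {B : Type*} [CommRing B] [IsDomain B] [Algebra 𝕂 B] [Algebra.FiniteType 𝕂 B]
    (k r : ℕ) (hr : r ≤ k)
    (X : Matrix (Fin k) (Fin k) (Polynomial B))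
    (f : B) (hf : f ≠ 0)
    (hrank : ∀ φ : B →ₐ[𝕂] 𝕂, φ f ≠ 0 →
      (X.map (fun pol => φ (pol.coeff 0))).rank ≤ r) :
    ∃ b : Polynomial B, X.det = Polynomial.X ^ (k - r) * b := by
  suffices hdvd : (Polynomial.X : Polynomial B) ^ (k - r) ∣ X.det by
    obtain ⟨b, hb⟩ := hdvd
    exact ⟨b, hb⟩
  rw [Polynomial.X_pow_dvd_iff]
  intro d hd
  set c : B := X.det.coeff d with hc
  -- show c vanishes at all points where f doesn't vanish
  have hpt : ∀ φ : B →ₐ[𝕂] 𝕂, φ f ≠ 0 → φ c = 0 := by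
    intro φ hφf
    set M : Matrix (Fin k) (Fin k) (Polynomial 𝕂) :=
      X.map (fun p => p.map (φ : B →+* 𝕂)) with hM
    have hMrank : (M.map (fun p => p.coeff 0)).rank ≤ r := by
      have : M.map (fun p => p.coeff 0) = X.map (fun pol => φ (pol.coeff 0)) := by
        ext i j
        simp [hM, Matrix.map_apply, Polynomial.coeff_map]
      rw [this]
      exact hrank φ hφf
    have hdvdM := det_dvd_field_aux M hMrank
    rw [Polynomial.X_pow_dvd_iff] at hdvdM
    have hdet : M.det = X.det.map (φ : B →+* 𝕂) :=
      (RingHom.map_det (Polynomial.mapRingHom (φ : B →+* 𝕂)) X).symm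
    have := hdvdM d hd
    rw [hdet, Polynomial.coeff_map] at this
    exact this
  -- Nullstellensatz / Jacobson: conclude c = 0
  have hcf : c * f = 0 := by
    apply eq_zero_of_forall_algHom (𝕂 := 𝕂)
    intro φ
    by_cases hφf : φ f = 0
    · rw [_root_.map_mul, hφf, mul_zero]
    · rw [_root_.map_mul, hpt φ hφf, zero_mul]
  rcases mul_eq_zero.mp hcf with h0 | h0
  · exact h0
  · exact absurd h0 hf
end
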